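/- arXiv:2409.12918 — 3 statements merged into one kernel-verified Lean document; each statement's English description precedes it below -/
import Mathlib

section
/- Let E be a Banach space and B : E × E → E a bilinear map satisfying ‖B(e,f)‖_E ≤ C_B‖e‖_E‖f‖_E for all e, f ∈ E, where C_B > 0. If e₀ ∈ E satisfies ‖e₀‖_E ≤ ε for some ε with ε ≤ (4C_B)⁻¹, then there exists e ∈ E with e = e₀ − B(e,e) and ‖e‖_E ≤ 2ε, and this solution is unique among all elements of E of norm at most 2ε. -/
open Filter Topology

/-- Auxiliary scalar sequence controlling the quadratic iteration. -/
noncomputable def fpqTseq : ℕ → ℝ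
  | 0 => 0
  | n + 1 => (1 + fpqTseq n ^ 2) / 2

lemma fpqTseq_succ (n : ℕ) : fpqTseq (n + 1) = (1 + fpqTseq n ^ 2) / 2 := rfl

lemma fpqTseq_nonneg : ∀ n, 0 ≤ fpqTseq n
  | 0 => le_refl 0
  | n + 1 => by
      have := fpqTseq_nonneg n
      rw [fpqTseq_succ]; nlinarith

lemma fpqTseq_le_one : ∀ n, fpqTseq n ≤ 1
  | 0 => by norm_num [fpqTseq]
  | n + 1 => by
      have h1 := fpqTseq_le_one n
      have h0 := fpqTseq_nonneg n
      rw [fpqTseq_succ]; nlinarith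

lemma fpqTseq_le_succ (n : ℕ) : fpqTseq n ≤ fpqTseq (n + 1) := by
  have := fpqTseq_le_one n
  rw [fpqTseq_succ]; nlinarith

lemma fpqTseq_mono : Monotone fpqTseq := monotone_nat_of_le_succ fpqTseq_le_succ

lemma fpqTseq_one_sub (n : ℕ) : 1 - fpqTseq n ≤ 2 / (n + 2) := by
  induction n with
  | zero => norm_num [fpqTseq]
  | succ n ih =>
    have h0 := fpqTseq_nonneg n
    have h1 := fpqTseq_le_one n
    have hN : (0:ℝ) < (n:ℝ) + 2 := by positivity
    have hN3 : (0:ℝ) < (n:ℝ) + 3 := by positivity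
    rw [fpqTseq_succ]
    have ih' : (1 - fpqTseq n) * ((n:ℝ) + 2) ≤ 2 := by
      rw [← le_div_iff₀ hN]; exact ih
    have hcast : ((n + 1 : ℕ) : ℝ) + 2 = (n:ℝ) + 3 := by push_cast; ring
    rw [hcast, le_div_iff₀ hN3]
    nlinarith [mul_nonneg (by linarith : (0:ℝ) ≤ 2 - (1 - fpqTseq n) * ((n:ℝ) + 2))
      (by linarith : (0:ℝ) ≤ 2 - (1 - fpqTseq n)), sq_nonneg (1 - fpqTseq n)]

/-- **Fixed point theorem for a quadratic equation in a Banach space.**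
If `B` is a bounded bilinear map on a Banach space `E` with bound `C_B > 0`,
and `‖e₀‖ ≤ ε ≤ (4 C_B)⁻¹`, then the equation `e = e₀ - B e e` has a solution with
`‖e‖ ≤ 2 ε`, unique among elements of norm at most `2 ε`. -/
theorem fixed_point_quadratic
    {E : Type*} [NormedAddCommGroup E] [NormedSpace ℝ E] [CompleteSpace E]
    (B : E →ₗ[ℝ] E →ₗ[ℝ] E) (C_B : ℝ) (hC : 0 < C_B)
    (hB : ∀ e f : E, ‖B e f‖ ≤ C_B * ‖e‖ * ‖f‖)
    (e₀ : E) (ε : ℝ) (hε : ε ≤ (4 * C_B)⁻¹) (he₀ : ‖e₀‖ ≤ ε) :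
    ∃! e : E, e = e₀ - B e e ∧ ‖e‖ ≤ 2 * ε := by
  have hε0 : 0 ≤ ε := le_trans (norm_nonneg _) he₀
  have h4C : (0:ℝ) < 4 * C_B := by positivity
  have h4 : 4 * C_B * ε ≤ 1 := by
    calc 4 * C_B * ε ≤ 4 * C_B * (4 * C_B)⁻¹ :=
          mul_le_mul_of_nonneg_left hε h4C.le
      _ = 1 := mul_inv_cancel₀ h4C.ne'
  -- bilinear difference estimate
  have hdiff : ∀ x y : E, ‖B x x - B y y‖ ≤ C_B * (‖x‖ + ‖y‖) * ‖x - y‖ := by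
    intro x y
    have hid : B x x - B y y = B x (x - y) + B (x - y) y := by
      simp only [map_sub, LinearMap.sub_apply]
      abel
    rw [hid]
    calc ‖B x (x - y) + B (x - y) y‖ ≤ ‖B x (x - y)‖ + ‖B (x - y) y‖ := norm_add_le _ _
      _ ≤ C_B * ‖x‖ * ‖x - y‖ + C_B * ‖x - y‖ * ‖y‖ := add_le_add (hB _ _) (hB _ _)
      _ = C_B * (‖x‖ + ‖y‖) * ‖x - y‖ := by ring
  -- the iteration sequence
  obtain ⟨u, hu0, huS⟩ : ∃ u : ℕ → E, u 0 = 0 ∧ ∀ n, u (n + 1) = e₀ - B (u n) (u n) :=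
    ⟨fun n => Nat.rec 0 (fun _ x => e₀ - B x x) n, rfl, fun n => rfl⟩
  -- norm bound on the iterates
  have hun : ∀ n, ‖u n‖ ≤ 2 * ε * fpqTseq n := by
    intro n; induction n with
    | zero => simp [hu0, fpqTseq]
    | succ n ih =>
      have h1 := hB (u n) (u n)
      have h2 := fpqTseq_nonneg n
      have h3 := fpqTseq_le_one n
      have hnn : 0 ≤ ‖u n‖ := norm_nonneg _
      rw [huS]
      calc ‖e₀ - B (u n) (u n)‖ ≤ ‖e₀‖ + ‖B (u n) (u n)‖ := norm_sub_le _ _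
        _ ≤ ε + C_B * ‖u n‖ * ‖u n‖ := add_le_add he₀ h1
        _ ≤ 2 * ε * fpqTseq (n + 1) := by
            rw [fpqTseq_succ]
            nlinarith [mul_le_mul ih ih hnn (by positivity : (0:ℝ) ≤ 2 * ε * fpqTseq n),
              mul_nonneg (mul_nonneg hε0 (sq_nonneg (fpqTseq n)))
                (by linarith : (0:ℝ) ≤ 1 - 4 * C_B * ε)]
  have hub : ∀ n, ‖u n‖ ≤ 2 * ε := by
    intro n
    have := fpqTseq_le_one n
    have := fpqTseq_nonneg n
    nlinarith [hun n]
  -- consecutive differences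
  have hstep : ∀ n, ‖u (n + 1) - u n‖ ≤ 2 * ε * (fpqTseq (n + 1) - fpqTseq n) := by
    intro n; induction n with
    | zero =>
      have : u 1 - u 0 = e₀ := by
        rw [huS, hu0]; simp
      rw [this]
      have : fpqTseq 1 - fpqTseq 0 = 1 / 2 := by norm_num [fpqTseq]
      rw [this]; linarith
    | succ n ih =>
      have key : u (n + 2) - u (n + 1) = B (u n) (u n) - B (u (n + 1)) (u (n + 1)) := by
        rw [huS (n + 1), huS n]; abel
      have h6 : ‖u n‖ + ‖u (n + 1)‖ ≤ 2 * ε * fpqTseq n + 2 * ε * fpqTseq (n + 1) :=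
        add_le_add (hun n) (hun (n + 1))
      have h5 : ‖u n - u (n + 1)‖ ≤ 2 * ε * (fpqTseq (n + 1) - fpqTseq n) := by
        rw [norm_sub_rev]; exact ih
      have hmn := fpqTseq_le_succ n
      have h0 := fpqTseq_nonneg n
      have h0' := fpqTseq_nonneg (n + 1)
      calc ‖u (n + 2) - u (n + 1)‖
          = ‖B (u n) (u n) - B (u (n + 1)) (u (n + 1))‖ := by rw [key]
        _ ≤ C_B * (‖u n‖ + ‖u (n + 1)‖) * ‖u n - u (n + 1)‖ := hdiff _ _
        _ ≤ C_B * (2 * ε * fpqTseq n + 2 * ε * fpqTseq (n + 1))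
              * (2 * ε * (fpqTseq (n + 1) - fpqTseq n)) := by
            apply mul_le_mul (mul_le_mul_of_nonneg_left h6 hC.le) h5 (norm_nonneg _)
              (by positivity)
        _ ≤ 2 * ε * (fpqTseq (n + 2) - fpqTseq (n + 1)) := by
            rw [fpqTseq_succ (n + 1), fpqTseq_succ n]
            nlinarith [mul_nonneg (mul_nonneg hε0
                (by nlinarith [sq_nonneg (1 - fpqTseq n ^ 2)] :
                  (0:ℝ) ≤ ((1 + fpqTseq n ^ 2) / 2) ^ 2 - fpqTseq n ^ 2))
              (by linarith : (0:ℝ) ≤ 1 - 4 * C_B * ε)]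
  -- telescoped differences
  have hclose : ∀ n m, n ≤ m → ‖u m - u n‖ ≤ 2 * ε * (fpqTseq m - fpqTseq n) := by
    intro n m h
    induction m, h using Nat.le_induction with
    | base => simp
    | succ m hm ih =>
      calc ‖u (m + 1) - u n‖ ≤ ‖u (m + 1) - u m‖ + ‖u m - u n‖ :=
            norm_sub_le_norm_sub_add_norm_sub _ _ _
        _ ≤ 2 * ε * (fpqTseq (m + 1) - fpqTseq m) + 2 * ε * (fpqTseq m - fpqTseq n) :=
            add_le_add (hstep m) ih
        _ = 2 * ε * (fpqTseq (m + 1) - fpqTseq n) := by ring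
  -- the uniform bound tends to zero
  have hlim0 : Tendsto (fun N : ℕ => 2 * ε * (2 / ((N:ℝ) + 2))) atTop (𝓝 0) := by
    have h1 : Tendsto (fun N : ℕ => (2:ℝ) / ((N:ℝ) + 2)) atTop (𝓝 0) :=
      Tendsto.div_atTop tendsto_const_nhds
        (tendsto_atTop_add_const_right _ 2 tendsto_natCast_atTop_atTop)
    simpa using h1.const_mul (2 * ε)
  have hbnd : ∀ n m (N : ℕ), N ≤ n → N ≤ m →
      ‖u m - u n‖ ≤ 2 * ε * (2 / ((N:ℝ) + 2)) := by
    intro n m N hn hm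
    rcases le_total n m with h | h
    · refine (hclose n m h).trans ?_
      have h1 := fpqTseq_le_one m
      have h2 := fpqTseq_mono hn
      have h3 := fpqTseq_one_sub N
      have h4' : fpqTseq m - fpqTseq n ≤ 2 / ((N:ℝ) + 2) := by linarith
      exact mul_le_mul_of_nonneg_left h4' (by positivity)
    · rw [norm_sub_rev]
      refine (hclose m n h).trans ?_
      have h1 := fpqTseq_le_one n
      have h2 := fpqTseq_mono hm
      have h3 := fpqTseq_one_sub N
      have h4' : fpqTseq n - fpqTseq m ≤ 2 / ((N:ℝ) + 2) := by linarith
      exact mul_le_mul_of_nonneg_left h4' (by positivity)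
  have hcau : CauchySeq u := by
    apply cauchySeq_of_le_tendsto_0 (fun N : ℕ => 2 * ε * (2 / ((N:ℝ) + 2))) _ hlim0
    intro n m N hn hm
    rw [dist_eq_norm, norm_sub_rev]
    exact hbnd n m N hn hm
  obtain ⟨e, he⟩ := cauchySeq_tendsto_of_complete hcau
  -- the limit satisfies the equation
  have hBlim : Tendsto (fun n => B (u n) (u n)) atTop (𝓝 (B e e)) := by
    have h1 : ∀ n, ‖B (u n) (u n) - B e e‖ ≤ C_B * (2 * ε + ‖e‖) * ‖u n - e‖ := by
      intro n
      refine (hdiff _ _).trans ?_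
      apply mul_le_mul_of_nonneg_right _ (norm_nonneg _)
      exact mul_le_mul_of_nonneg_left (by linarith [hub n]) hC.le
    have h2 : Tendsto (fun n => ‖u n - e‖) atTop (𝓝 0) :=
      tendsto_iff_norm_sub_tendsto_zero.1 he
    have h3 : Tendsto (fun n => C_B * (2 * ε + ‖e‖) * ‖u n - e‖) atTop (𝓝 0) := by
      simpa using h2.const_mul (C_B * (2 * ε + ‖e‖))
    have h4' : Tendsto (fun n => ‖B (u n) (u n) - B e e‖) atTop (𝓝 0) :=
      squeeze_zero (fun n => norm_nonneg _) h1 h3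
    exact tendsto_iff_norm_sub_tendsto_zero.2 h4'
  have hefix : e = e₀ - B e e := by
    have h1 : Tendsto (fun n => u (n + 1)) atTop (𝓝 e) :=
      he.comp (tendsto_add_atTop_nat 1)
    have h2 : Tendsto (fun n => e₀ - B (u n) (u n)) atTop (𝓝 (e₀ - B e e)) :=
      tendsto_const_nhds.sub hBlim
    have h3 : (fun n => u (n + 1)) = fun n => e₀ - B (u n) (u n) := funext huS
    exact tendsto_nhds_unique h1 (h3 ▸ h2)
  have henorm : ‖e‖ ≤ 2 * ε := le_of_tendsto' he.norm hub
  -- any solution of norm ≤ 2ε is the limit of the iteration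
  have huniq : ∀ f : E, f = e₀ - B f f → ‖f‖ ≤ 2 * ε → Tendsto u atTop (𝓝 f) := by
    intro f hf hfn
    have hkey : ∀ n, ‖f - u n‖ ≤ 2 * ε * (1 - fpqTseq n) := by
      intro n; induction n with
      | zero => simpa [hu0, fpqTseq] using hfn
      | succ n ih =>
        have hid : f - u (n + 1) = B (u n) (u n) - B f f := by
          nth_rewrite 1 [hf]
          rw [huS]; abel
        have h6 : ‖u n‖ + ‖f‖ ≤ 2 * ε * fpqTseq n + 2 * ε := add_le_add (hun n) hfn
        have h5 : ‖u n - f‖ ≤ 2 * ε * (1 - fpqTseq n) := by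
          rw [norm_sub_rev]; exact ih
        have h7 : 0 ≤ 1 - fpqTseq n := by linarith [fpqTseq_le_one n]
        have h0 := fpqTseq_nonneg n
        calc ‖f - u (n + 1)‖ = ‖B (u n) (u n) - B f f‖ := by rw [hid]
          _ ≤ C_B * (‖u n‖ + ‖f‖) * ‖u n - f‖ := hdiff _ _
          _ ≤ C_B * (2 * ε * fpqTseq n + 2 * ε) * (2 * ε * (1 - fpqTseq n)) := by
              apply mul_le_mul (mul_le_mul_of_nonneg_left h6 hC.le) h5 (norm_nonneg _)
                (by positivity)
          _ ≤ 2 * ε * (1 - fpqTseq (n + 1)) := by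
              rw [fpqTseq_succ]
              nlinarith [mul_nonneg (mul_nonneg hε0
                  (mul_nonneg h7 (by linarith : (0:ℝ) ≤ 1 + fpqTseq n)))
                (by linarith : (0:ℝ) ≤ 1 - 4 * C_B * ε)]
    have hk2 : ∀ n : ℕ, 2 * ε * (1 - fpqTseq n) ≤ 2 * ε * (2 / ((n:ℝ) + 2)) := by
      intro n
      exact mul_le_mul_of_nonneg_left (fpqTseq_one_sub n) (by positivity)
    have hk3 : Tendsto (fun n => ‖f - u n‖) atTop (𝓝 0) :=
      squeeze_zero (fun n => norm_nonneg _)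
        (fun n => (hkey n).trans (hk2 n)) hlim0
    have hk4 : Tendsto (fun n => ‖u n - f‖) atTop (𝓝 0) := by
      simpa [norm_sub_rev] using hk3
    exact tendsto_iff_norm_sub_tendsto_zero.2 hk4
  refine ⟨e, ⟨hefix, henorm⟩, ?_⟩
  rintro f ⟨hf1, hf2⟩
  exact tendsto_nhds_unique (huniq f hf1 hf2) he
end

section
/- Let E be a Banach space, B : E × E → E a bilinear map with ‖B(e,f)‖_E ≤ C_B‖e‖_E‖f‖_E for all e, f ∈ E and C_B ≥ 1, let e₀ ∈ E, and let U ∈ E satisfy ‖B(e,U)‖_E + ‖B(U,e)‖_E ≤ (1/8)‖e‖_E for all e ∈ E. If e and f both satisfy the equation x = e₀ − B(x,x) − B(U,x) − B(x,U), with ‖e‖_E ≤ 3/(8C_B) and ‖f‖_E ≤ 7/(16C_B), then e = f. -/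
/-- **Uniqueness of small solutions of the perturbed quadratic equation.**
Let `B` be a bounded bilinear map on a Banach space `E` with bound `C_B ≥ 1`, and let `U`
satisfy `‖B e U‖ + ‖B U e‖ ≤ (1/8) ‖e‖` for all `e`. If `e` and `f` both satisfy
`x = e₀ - B x x - B U x - B x U`, with `‖e‖ ≤ 3/(8 C_B)` and `‖f‖ ≤ 7/(16 C_B)`,
then `e = f`. -/
theorem perturbed_solution_unique
    {E : Type*} [NormedAddCommGroup E] [NormedSpace ℝ E] [CompleteSpace E]
    (B : E →ₗ[ℝ] E →ₗ[ℝ] E) (C_B : ℝ) (hC : 1 ≤ C_B)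
    (hB : ∀ e f : E, ‖B e f‖ ≤ C_B * ‖e‖ * ‖f‖)
    (e₀ U : E) (hU : ∀ e : E, ‖B e U‖ + ‖B U e‖ ≤ (1 / 8) * ‖e‖)
    (e f : E)
    (he : e = e₀ - B e e - B U e - B e U)
    (hf : f = e₀ - B f f - B U f - B f U)
    (hebd : ‖e‖ ≤ 3 / (8 * C_B)) (hfbd : ‖f‖ ≤ 7 / (16 * C_B)) :
    e = f := by
  have hCpos : (0 : ℝ) < C_B := lt_of_lt_of_le one_pos hC
  have h1 : e - f = B (f - e) f + B e (f - e) + B U (f - e) + B (f - e) U := by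
    conv_lhs => rw [he, hf]
    simp only [map_sub, LinearMap.sub_apply]
    abel
  have h2 : ‖e - f‖ ≤ C_B * ‖f - e‖ * ‖f‖ + C_B * ‖e‖ * ‖f - e‖
      + (1 / 8) * ‖f - e‖ := by
    rw [h1]
    calc ‖B (f - e) f + B e (f - e) + B U (f - e) + B (f - e) U‖
        ≤ ‖B (f - e) f‖ + ‖B e (f - e)‖ + (‖B (f - e) U‖ + ‖B U (f - e)‖) := by
          have := norm_add_le (B (f - e) f + B e (f - e) + B U (f - e)) (B (f - e) U)
          have h3 := norm_add_le (B (f - e) f + B e (f - e)) (B U (f - e))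
          have h4 := norm_add_le (B (f - e) f) (B e (f - e))
          linarith
      _ ≤ C_B * ‖f - e‖ * ‖f‖ + C_B * ‖e‖ * ‖f - e‖ + (1 / 8) * ‖f - e‖ := by
          have := hB (f - e) f
          have := hB e (f - e)
          have := hU (f - e)
          linarith
  have hfe : ‖f - e‖ = ‖e - f‖ := norm_sub_rev f e
  rw [hfe] at h2
  have hCf : C_B * ‖f‖ ≤ 7 / 16 := by
    have := mul_le_mul_of_nonneg_left hfbd (le_of_lt hCpos)
    calc C_B * ‖f‖ ≤ C_B * (7 / (16 * C_B)) := this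
      _ = 7 / 16 := by field_simp
  have hCe : C_B * ‖e‖ ≤ 3 / 8 := by
    have := mul_le_mul_of_nonneg_left hebd (le_of_lt hCpos)
    calc C_B * ‖e‖ ≤ C_B * (3 / (8 * C_B)) := this
      _ = 3 / 8 := by field_simp
  have hnn : (0 : ℝ) ≤ ‖e - f‖ := norm_nonneg _
  have h5 : ‖e - f‖ ≤ (15 / 16) * ‖e - f‖ := by
    have ha : C_B * ‖e - f‖ * ‖f‖ ≤ 7 / 16 * ‖e - f‖ := by
      have : C_B * ‖e - f‖ * ‖f‖ = (C_B * ‖f‖) * ‖e - f‖ := by ring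
      rw [this]
      exact mul_le_mul_of_nonneg_right hCf hnn
    have hb : C_B * ‖e‖ * ‖e - f‖ ≤ 3 / 8 * ‖e - f‖ :=
      mul_le_mul_of_nonneg_right hCe hnn
    linarith
  have : ‖e - f‖ ≤ 0 := by linarith
  have : e - f = 0 := norm_le_zero_iff.mp this
  exact sub_eq_zero.mp this
end

section
/- Let λ > 1 and let u₀ : ℝ³ → ℝ³ be a measurable function that is λ-discretely self-similar, i.e. u₀(x) = λ u₀(λx) for almost every x ∈ ℝ³. Then ‖u₀‖³_{L^{3,∞}(ℝ³)} ≤ (λ³/(3(λ−1))) ∫_{{x : 1 ≤ |x| ≤ λ}} |u₀(x)|³ dx. In particular, a λ-DSS vector field belongs to L^{3,∞}(ℝ³) if and only if it belongs to L³ of the annulus {1 ≤ |x| ≤ λ}. -/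
open MeasureTheory
open scoped ENNReal

/-- The weak-`L³` (Lorentz `L^{3,∞}`) quasinorm of a vector field on `ℝ³`:
`‖f‖_{L^{3,∞}} = sup_{α > 0} α · |{x : |f x| > α}|^{1/3}` (Lebesgue measure). -/
noncomputable def weakL3Norm (f : EuclideanSpace ℝ (Fin 3) → EuclideanSpace ℝ (Fin 3)) :
    ℝ≥0∞ :=
  ⨆ (α : ℝ) (_ : 0 < α), ENNReal.ofReal α * volume {x | α < ‖f x‖} ^ ((1 : ℝ) / 3)

section DSSAux

open Set
open scoped Pointwise

local notation "E3" => EuclideanSpace ℝ (Fin 3)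


lemma vol_smul3 (c : ℝ) (hc : 0 ≤ c) (s : Set E3) :
    volume (c • s) = ENNReal.ofReal (c ^ 3) * volume s := by
  rw [Measure.addHaar_smul_of_nonneg volume hc s, finrank_euclideanSpace_fin]

lemma ae_smul3 {c : ℝ} (hc : c ≠ 0) {p : E3 → Prop} (h : ∀ᵐ x, p x) :
    ∀ᵐ x, p (c • x) := by
  rw [ae_iff] at h ⊢
  have hset : {x : E3 | ¬ p (c • x)} = c⁻¹ • {x | ¬ p x} := by
    ext x
    rw [Set.mem_inv_smul_set_iff₀ hc]
    rfl
  rw [hset, Measure.addHaar_smul, h, mul_zero]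


lemma ae_iter {lam : ℝ} (hlam : 1 < lam)
    {u₀ : E3 → E3} (hdss : ∀ᵐ x : E3, u₀ x = lam • u₀ (lam • x)) :
    ∀ z : ℤ, ∀ᵐ x : E3, u₀ x = (lam ^ z) • u₀ ((lam ^ z) • x) := by
  have hl0 : (0:ℝ) < lam := by linarith
  have hln : lam ≠ 0 := ne_of_gt hl0
  have hn : ∀ n : ℕ, ∀ᵐ x : E3, u₀ x = (lam ^ n) • u₀ ((lam ^ n) • x) := by
    intro n
    induction n with
    | zero => simp
    | succ n ih =>
      have h2 : ∀ᵐ x : E3, u₀ (lam • x) = (lam ^ n) • u₀ ((lam ^ n) • (lam • x)) :=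
        ae_smul3 hln ih
      filter_upwards [hdss, h2] with x h1 h2
      rw [h1, h2, smul_smul, smul_smul, mul_comm lam (lam ^ n), ← pow_succ]
  intro z
  rcases z.eq_nat_or_neg with ⟨n, rfl | rfl⟩
  · simpa [zpow_natCast] using hn n
  · have h1 : ∀ᵐ x : E3, u₀ ((lam ^ (-(n:ℤ))) • x)
        = (lam ^ n) • u₀ ((lam ^ n) • ((lam ^ (-(n:ℤ))) • x)) :=
      ae_smul3 (zpow_ne_zero _ hln) (hn n)
    filter_upwards [h1] with x hx
    have harg : (lam ^ n) • ((lam ^ (-(n:ℤ))) • x) = x := by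
      rw [smul_smul, ← zpow_natCast lam n, ← zpow_add₀ hln]
      simp
    rw [harg] at hx
    rw [hx, smul_smul, ← zpow_natCast lam n, ← zpow_add₀ hln]
    simp


-- the scaling identity for level sets
lemma vol_scale {lam : ℝ} (hlam : 1 < lam) {u₀ : E3 → E3}
    (hiter : ∀ z : ℤ, ∀ᵐ x : E3, u₀ x = (lam ^ z) • u₀ ((lam ^ z) • x))
    (z : ℤ) (α : ℝ) (W : Set E3) :
    volume ({x : E3 | α < ‖u₀ x‖} ∩ (lam ^ z) • W)
      = ENNReal.ofReal ((lam ^ z) ^ 3) * volume ({x : E3 | α * lam ^ z < ‖u₀ x‖} ∩ W) := by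
  have hl0 : (0:ℝ) < lam := by linarith
  have hzpos : (0:ℝ) < lam ^ z := zpow_pos hl0 z
  have hzne : (lam:ℝ) ^ z ≠ 0 := ne_of_gt hzpos
  have hset : ({x : E3 | α < ‖u₀ x‖} ∩ (lam ^ z) • W : Set E3)
      =ᵐ[volume] (lam ^ z) • ({x : E3 | α * lam ^ z < ‖u₀ x‖} ∩ W) := by
    rw [Filter.eventuallyEq_set]
    filter_upwards [hiter (-z)] with x hx
    have hnorm : ‖u₀ x‖ = (lam ^ z)⁻¹ * ‖u₀ ((lam ^ z)⁻¹ • x)‖ := by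
      rw [hx, norm_smul, Real.norm_eq_abs, abs_of_pos (zpow_pos hl0 (-z)), zpow_neg]
    constructor
    · rintro ⟨hx1, hx2⟩
      rw [Set.mem_smul_set_iff_inv_smul_mem₀ hzne] at hx2 ⊢
      refine ⟨?_, hx2⟩
      simp only [Set.mem_setOf_eq] at hx1 ⊢
      rw [hnorm, inv_mul_eq_div, lt_div_iff₀ hzpos] at hx1
      exact hx1
    · intro hx2
      rw [Set.mem_smul_set_iff_inv_smul_mem₀ hzne] at hx2
      obtain ⟨hx1, hxW⟩ := hx2
      refine ⟨?_, ?_⟩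
      · simp only [Set.mem_setOf_eq] at hx1 ⊢
        rw [hnorm, inv_mul_eq_div, lt_div_iff₀ hzpos]
        exact hx1
      · rw [Set.mem_smul_set_iff_inv_smul_mem₀ hzne]
        exact hxW
  rw [measure_congr hset, vol_smul3 _ (le_of_lt hzpos)]

lemma smul_ann {lam c : ℝ} (hc : 0 < c) :
    c • {x : E3 | 1 ≤ ‖x‖ ∧ ‖x‖ < lam} = {x : E3 | c ≤ ‖x‖ ∧ ‖x‖ < c * lam} := by
  ext x
  rw [Set.mem_smul_set_iff_inv_smul_mem₀ (ne_of_gt hc)]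
  simp only [Set.mem_setOf_eq, norm_smul, Real.norm_eq_abs, abs_of_pos (inv_pos.2 hc),
    inv_mul_eq_div]
  rw [le_div_iff₀ hc, div_lt_iff₀ hc, one_mul, mul_comm lam c]

-- covering: each nonzero norm lies in some dyadic-lam annulus
lemma ann_cover {lam : ℝ} (hlam : 1 < lam) {t : ℝ} (ht : 0 < t) :
    ∃ z : ℤ, lam ^ z ≤ t ∧ t < lam ^ (z + 1) := by
  have hl0 : (0:ℝ) < lam := by linarith
  refine ⟨⌊Real.logb lam t⌋, ?_, ?_⟩
  · calc lam ^ (⌊Real.logb lam t⌋ : ℤ) = lam ^ ((⌊Real.logb lam t⌋ : ℝ)) := by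
          rw [Real.rpow_intCast]
    _ ≤ lam ^ (Real.logb lam t) :=
          Real.rpow_le_rpow_of_exponent_le (le_of_lt hlam) (Int.floor_le _)
    _ = t := Real.rpow_logb hl0 (ne_of_gt hlam) ht
  · calc t = lam ^ (Real.logb lam t) := (Real.rpow_logb hl0 (ne_of_gt hlam) ht).symm
    _ < lam ^ ((⌊Real.logb lam t⌋ + 1 : ℤ) : ℝ) := by
          apply Real.rpow_lt_rpow_of_exponent_lt hlam
          push_cast
          exact Int.lt_floor_add_one _
    _ = lam ^ (⌊Real.logb lam t⌋ + 1 : ℤ) := Real.rpow_intCast _ _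

-- the geometric sum bound
lemma key_sum {lam : ℝ} (hlam : 1 < lam) {α : ℝ} (hα : 0 < α) (v : ℝ) :
    (∑' z : ℤ, (ENNReal.ofReal (α * lam ^ z)) ^ 3 * (if α * lam ^ z < v then 1 else 0))
      ≤ ENNReal.ofReal (lam ^ 3 / (3 * (lam - 1))) * (ENNReal.ofReal v) ^ 3 := by
  have hl0 : (0:ℝ) < lam := by linarith
  by_cases hv : 0 < v
  · set r := Real.logb lam (v / α) with hr
    set k₁ : ℤ := ⌈r⌉ - 1 with hk₁def
    have hvα : 0 < v / α := div_pos hv hα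
    have hk₁lt : (lam:ℝ) ^ k₁ < v / α := by
      calc (lam:ℝ) ^ k₁ = lam ^ ((k₁ : ℝ)) := (Real.rpow_intCast _ _).symm
      _ < lam ^ r := by
            apply Real.rpow_lt_rpow_of_exponent_lt hlam
            push_cast [hk₁def]
            linarith [Int.ceil_lt_add_one r]
      _ = v / α := Real.rpow_logb hl0 (ne_of_gt hlam) hvα
    have hmem : ∀ z : ℤ, α * lam ^ z < v → z ≤ k₁ := by
      intro z hz
      have h1 : (lam:ℝ) ^ z < v / α := by
        rw [lt_div_iff₀ hα]; linarith [hz]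
      have h2 : ((z:ℝ)) < r := by
        have : lam ^ ((z:ℝ)) < lam ^ r := by
          rw [Real.rpow_intCast, hr, Real.rpow_logb hl0 (ne_of_gt hlam) hvα]; exact h1
        exact (Real.rpow_lt_rpow_left_iff hlam).1 this
      have h3 : (z:ℝ) < (⌈r⌉ : ℝ) := lt_of_lt_of_le h2 (Int.le_ceil r)
      have h4 : z < ⌈r⌉ := by exact_mod_cast h3
      omega
    -- bound term by term
    have hstep : (∑' z : ℤ, (ENNReal.ofReal (α * lam ^ z)) ^ 3 * (if α * lam ^ z < v then 1 else 0))
        ≤ ∑' z : ℤ, (if z ≤ k₁ then ENNReal.ofReal ((α * lam ^ z) ^ 3) else 0) := by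
      apply ENNReal.tsum_le_tsum
      intro z
      by_cases hz : α * lam ^ z < v
      · rw [if_pos hz, if_pos (hmem z hz), mul_one,
          ← ENNReal.ofReal_pow (by positivity : (0:ℝ) ≤ α * lam ^ z)]
      · rw [if_neg hz, mul_zero]
        exact zero_le
    refine le_trans hstep ?_
    -- reindex by n ↦ k₁ - n
    have hinj : Function.Injective (fun n : ℕ => k₁ - (n:ℤ)) := by
      intro a b hab
      simpa using hab
    have hsupp : Function.support
          (fun z : ℤ => if z ≤ k₁ then ENNReal.ofReal ((α * lam ^ z) ^ 3) else 0)
        ⊆ Set.range (fun n : ℕ => k₁ - (n:ℤ)) := by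
      intro z hz
      simp only [Function.mem_support] at hz
      rcases le_or_gt z k₁ with h | h
      · exact ⟨(k₁ - z).toNat, by show k₁ - ((k₁ - z).toNat : ℤ) = z; omega⟩
      · exact absurd (if_neg (not_le.2 h)) hz
    rw [← Function.Injective.tsum_eq hinj hsupp]
    have hterm : ∀ n : ℕ, (if (k₁ - (n:ℤ)) ≤ k₁ then ENNReal.ofReal ((α * lam ^ (k₁ - (n:ℤ))) ^ 3) else 0)
        = ENNReal.ofReal ((α * lam ^ k₁) ^ 3) * (ENNReal.ofReal ((lam⁻¹) ^ 3)) ^ n := by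
      intro n
      rw [if_pos (by omega)]
      rw [← ENNReal.ofReal_pow (by positivity), ← ENNReal.ofReal_mul (by positivity)]
      congr 1
      rw [zpow_sub₀ (ne_of_gt hl0), zpow_natCast]
      field_simp
      ring_nf
      rw [← mul_pow, mul_inv_cancel₀ (ne_of_gt hl0), one_pow]
    calc (∑' n : ℕ, (if (k₁ - (n:ℤ)) ≤ k₁ then ENNReal.ofReal ((α * lam ^ (k₁ - (n:ℤ))) ^ 3) else 0))
        = ∑' n : ℕ, ENNReal.ofReal ((α * lam ^ k₁) ^ 3) * (ENNReal.ofReal ((lam⁻¹) ^ 3)) ^ n := by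
          exact tsum_congr hterm
      _ = ENNReal.ofReal ((α * lam ^ k₁) ^ 3) * (1 - ENNReal.ofReal ((lam⁻¹) ^ 3))⁻¹ := by
          rw [ENNReal.tsum_mul_left, ENNReal.tsum_geometric]
      _ = (1 - ENNReal.ofReal ((lam⁻¹) ^ 3))⁻¹ * ENNReal.ofReal ((α * lam ^ k₁) ^ 3) :=
          mul_comm _ _
      _ ≤ ENNReal.ofReal (lam ^ 3 / (3 * (lam - 1))) * ENNReal.ofReal (v ^ 3) := by
          apply mul_le_mul'
          · -- (1 - ofReal lam⁻³)⁻¹ ≤ ofReal (lam³/(3(lam-1)))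
            have hs : (0:ℝ) < 1 - lam⁻¹ ^ 3 := by
              have h1 : lam⁻¹ < 1 := inv_lt_one_of_one_lt₀ hlam
              have h0 : (0:ℝ) < lam⁻¹ := inv_pos.2 hl0
              have h2 : lam⁻¹ ^ 3 < 1 := pow_lt_one₀ (le_of_lt h0) h1 (by norm_num)
              linarith
            have heq : (1 : ℝ≥0∞) - ENNReal.ofReal (lam⁻¹ ^ 3) = ENNReal.ofReal (1 - lam⁻¹ ^ 3) := by
              rw [ENNReal.ofReal_sub _ (by positivity), ENNReal.ofReal_one]
            rw [heq, ← ENNReal.ofReal_inv_of_pos hs]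
            apply ENNReal.ofReal_le_ofReal
            have hpos3 : (0:ℝ) < 3 * (lam - 1) := by linarith
            rw [inv_eq_one_div, div_le_div_iff₀ hs hpos3]
            have hkey : lam ^ 3 * (1 - lam⁻¹ ^ 3) = lam ^ 3 - 1 := by
              field_simp
            nlinarith [sq_nonneg (lam - 1), hkey]
          · apply ENNReal.ofReal_le_ofReal
            have h5 : α * lam ^ k₁ < v := by
              rw [← lt_div_iff₀' hα]; exact hk₁lt
            have h6 : (0:ℝ) ≤ α * lam ^ k₁ := by positivity
            exact pow_le_pow_left₀ h6 (le_of_lt h5) 3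
      _ = ENNReal.ofReal (lam ^ 3 / (3 * (lam - 1))) * (ENNReal.ofReal v) ^ 3 := by
          rw [ENNReal.ofReal_pow (le_of_lt hv)]
  · have hz : ∀ z : ℤ, (ENNReal.ofReal (α * lam ^ z)) ^ 3 * (if α * lam ^ z < v then 1 else 0) = 0 := by
      intro z
      rw [if_neg, mul_zero]
      intro h
      have : (0:ℝ) < α * lam ^ z := by positivity
      linarith [not_lt.1 hv]
    have h0 : (∑' z : ℤ, (ENNReal.ofReal (α * lam ^ z)) ^ 3 * (if α * lam ^ z < v then 1 else 0))
        = 0 := by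
      rw [tsum_congr hz, tsum_zero]
    rw [h0]
    exact zero_le

section Main
variable {lam : ℝ} {u₀ : E3 → E3}

lemma measS (hu : Measurable u₀) (β : ℝ) : MeasurableSet {x : E3 | β < ‖u₀ x‖} :=
  measurableSet_lt measurable_const hu.norm

lemma measAnn' (a b : ℝ) : MeasurableSet {x : E3 | a ≤ ‖x‖ ∧ ‖x‖ < b} :=
  (measurableSet_le measurable_const measurable_norm).inter
    (measurableSet_lt measurable_norm measurable_const)

/-- The fundamental half-open annulus. -/
def Ann (lam : ℝ) : Set E3 := {x : E3 | 1 ≤ ‖x‖ ∧ ‖x‖ < lam}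

-- main per-α bound
lemma main_bound (hlam : 1 < lam) (hu : Measurable u₀)
    (hiter : ∀ z : ℤ, ∀ᵐ x : E3, u₀ x = (lam ^ z) • u₀ ((lam ^ z) • x))
    {α : ℝ} (hα : 0 < α) :
    ENNReal.ofReal α ^ 3 * volume {x : E3 | α < ‖u₀ x‖}
      ≤ ENNReal.ofReal (lam ^ 3 / (3 * (lam - 1))) *
          ∫⁻ x in Ann lam, ENNReal.ofReal ‖u₀ x‖ ^ 3 := by
  have hl0 : (0:ℝ) < lam := by linarith
  -- Step 1: covering bound
  have hcov : volume {x : E3 | α < ‖u₀ x‖}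
      ≤ ∑' z : ℤ, volume ({x : E3 | α < ‖u₀ x‖} ∩ (lam ^ z) • Ann lam) := by
    have h0 : volume {x : E3 | α < ‖u₀ x‖}
        = volume ({x : E3 | α < ‖u₀ x‖} \ {0}) :=
      (measure_diff_null (measure_singleton 0)).symm
    rw [h0]
    refine le_trans (measure_mono ?_) (measure_iUnion_le _)
    intro x hx
    obtain ⟨hx1, hx2⟩ := hx
    obtain ⟨z, hz1, hz2⟩ := ann_cover hlam (norm_pos_iff.2 (by simpa using hx2))
    refine Set.mem_iUnion.2 ⟨z, hx1, ?_⟩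
    rw [show Ann lam = {x : E3 | 1 ≤ ‖x‖ ∧ ‖x‖ < lam} from rfl, smul_ann (zpow_pos hl0 z)]
    exact ⟨hz1, by rwa [← zpow_add_one₀ (ne_of_gt hl0)]⟩
  -- Step 2: rewrite each annulus piece via the scaling identity
  have hscale : ∀ z : ℤ, volume ({x : E3 | α < ‖u₀ x‖} ∩ (lam ^ z) • Ann lam)
      = ENNReal.ofReal ((lam ^ z) ^ 3) * volume ({x : E3 | α * lam ^ z < ‖u₀ x‖} ∩ Ann lam) :=
    fun z => vol_scale hlam hiter z α (Ann lam)
  -- put things together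
  calc ENNReal.ofReal α ^ 3 * volume {x : E3 | α < ‖u₀ x‖}
      ≤ ENNReal.ofReal α ^ 3 *
          ∑' z : ℤ, ENNReal.ofReal ((lam ^ z) ^ 3) *
            volume ({x : E3 | α * lam ^ z < ‖u₀ x‖} ∩ Ann lam) := by
        apply mul_le_mul_right
        refine le_trans hcov (le_of_eq (tsum_congr hscale))
    _ = ∑' z : ℤ, ENNReal.ofReal ((α * lam ^ z) ^ 3) *
            volume ({x : E3 | α * lam ^ z < ‖u₀ x‖} ∩ Ann lam) := by
        rw [← ENNReal.tsum_mul_left]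
        apply tsum_congr
        intro z
        rw [← mul_assoc]
        congr 1
        rw [← ENNReal.ofReal_pow (le_of_lt hα), ← ENNReal.ofReal_mul (by positivity), mul_pow]
    _ = ∑' z : ℤ, ∫⁻ x in Ann lam,
            Set.indicator {x : E3 | α * lam ^ z < ‖u₀ x‖}
              (fun _ => ENNReal.ofReal ((α * lam ^ z) ^ 3)) x := by
        apply tsum_congr
        intro z
        rw [lintegral_indicator_const (measS hu _), Measure.restrict_apply (measS hu _)]
    _ = ∫⁻ x in Ann lam, ∑' z : ℤ,
            Set.indicator {x : E3 | α * lam ^ z < ‖u₀ x‖}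
              (fun _ => ENNReal.ofReal ((α * lam ^ z) ^ 3)) x := by
        rw [← lintegral_tsum]
        intro z
        exact (measurable_const.indicator (measS hu _)).aemeasurable
    _ ≤ ∫⁻ x in Ann lam,
          ENNReal.ofReal (lam ^ 3 / (3 * (lam - 1))) * ENNReal.ofReal ‖u₀ x‖ ^ 3 := by
        apply lintegral_mono
        intro x
        have hks := key_sum hlam hα ‖u₀ x‖
        refine le_trans (le_of_eq (tsum_congr fun z => ?_)) hks
        rw [Set.indicator_apply]
        simp only [Set.mem_setOf_eq]
        by_cases hcond : α * lam ^ z < ‖u₀ x‖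
        · rw [if_pos hcond, if_pos hcond, mul_one,
            ← ENNReal.ofReal_pow (by positivity)]
        · rw [if_neg hcond, if_neg hcond, mul_zero]
    _ = ENNReal.ofReal (lam ^ 3 / (3 * (lam - 1))) *
          ∫⁻ x in Ann lam, ENNReal.ofReal ‖u₀ x‖ ^ 3 := by
        rw [lintegral_const_mul _ ((hu.norm.ennreal_ofReal).pow_const 3)]



lemma cube_of_cbrt (a : ℝ≥0∞) : (a ^ ((1:ℝ)/3)) ^ (3:ℕ) = a := by
  rw [← ENNReal.rpow_natCast (a ^ ((1:ℝ)/3)) 3, ← ENNReal.rpow_mul]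
  norm_num

lemma ann_ae (hlam : 1 < lam) :
    ({x : E3 | 1 ≤ ‖x‖ ∧ ‖x‖ ≤ lam} : Set E3) =ᵐ[volume] Ann lam := by
  rw [MeasureTheory.ae_eq_set]
  constructor
  · apply measure_mono_null (t := Metric.sphere (0:E3) lam)
    · rintro x ⟨⟨h1, h2⟩, hno⟩
      rw [mem_sphere_zero_iff_norm]
      by_contra hne
      exact hno ⟨h1, lt_of_le_of_ne h2 hne⟩
    · exact Measure.addHaar_sphere volume 0 lam
  · have : Ann lam \ {x : E3 | 1 ≤ ‖x‖ ∧ ‖x‖ ≤ lam} = ∅ :=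
      Set.diff_eq_empty.2 (fun x hx => ⟨hx.1, le_of_lt hx.2⟩)
    rw [this, measure_empty]

lemma part2_forward (hlam : 1 < lam) (hu : Measurable u₀)
    (hiter : ∀ z : ℤ, ∀ᵐ x : E3, u₀ x = (lam ^ z) • u₀ ((lam ^ z) • x))
    (hM : (⨆ (α : ℝ) (_ : 0 < α),
        ENNReal.ofReal α * volume {x : E3 | α < ‖u₀ x‖} ^ ((1 : ℝ) / 3)) < ∞) :
    (∫⁻ x in Ann lam, ENNReal.ofReal ‖u₀ x‖ ^ 3) < ∞ := by
  classical
  have hl0 : (0:ℝ) < lam := by linarith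
  set M : ℝ≥0∞ := ⨆ (α : ℝ) (_ : 0 < α),
      ENNReal.ofReal α * volume {x : E3 | α < ‖u₀ x‖} ^ ((1 : ℝ) / 3) with hMdef
  -- volume of level set at 1 is at most M^3
  have hν1 : volume {x : E3 | (1:ℝ) < ‖u₀ x‖} ≤ M ^ (3:ℕ) := by
    have h1 : ENNReal.ofReal 1 * volume {x : E3 | (1:ℝ) < ‖u₀ x‖} ^ ((1:ℝ)/3) ≤ M :=
      le_iSup₂ (f := fun (α : ℝ) (_ : (0:ℝ) < α) =>
        ENNReal.ofReal α * volume {x : E3 | α < ‖u₀ x‖} ^ ((1 : ℝ) / 3)) 1 one_pos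
    rw [ENNReal.ofReal_one, one_mul] at h1
    calc volume {x : E3 | (1:ℝ) < ‖u₀ x‖}
        = (volume {x : E3 | (1:ℝ) < ‖u₀ x‖} ^ ((1:ℝ)/3)) ^ (3:ℕ) := (cube_of_cbrt _).symm
      _ ≤ M ^ (3:ℕ) := pow_le_pow_left' h1 3
  -- the ℕ-indexed annuli are pairwise disjoint
  set B : ℕ → Set E3 := fun k => (lam ^ (k:ℤ)) • Ann lam with hBdef
  have hBnorm : ∀ k : ℕ, B k = {x : E3 | lam ^ (k:ℤ) ≤ ‖x‖ ∧ ‖x‖ < lam ^ (k:ℤ) * lam} := by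
    intro k
    rw [hBdef]
    exact smul_ann (zpow_pos hl0 _)
  have hBmeas : ∀ k : ℕ, MeasurableSet (B k) := by
    intro k; rw [hBnorm]; exact measAnn' _ _
  have hBdisj : Pairwise (Function.onFun Disjoint
      (fun k : ℕ => {x : E3 | (1:ℝ) < ‖u₀ x‖} ∩ B k)) := by
    intro i j hij
    wlog hlt : i < j generalizing i j
    · exact (this hij.symm (by omega)).symm
    apply Set.disjoint_left.2
    rintro x ⟨-, hxi⟩ ⟨-, hxj⟩
    rw [hBnorm] at hxi hxj
    have h1 : lam ^ (i:ℤ) * lam = lam ^ ((i:ℤ)+1) := (zpow_add_one₀ (ne_of_gt hl0) _).symm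
    have h2 : (lam:ℝ) ^ ((i:ℤ)+1) ≤ lam ^ (j:ℤ) := by
      apply zpow_le_zpow_right₀ (le_of_lt hlam)
      omega
    have := hxi.2
    rw [h1] at this
    linarith [hxj.1, lt_of_lt_of_le this h2]
  have hsum : (∑' k : ℕ, volume ({x : E3 | (1:ℝ) < ‖u₀ x‖} ∩ B k))
      ≤ volume {x : E3 | (1:ℝ) < ‖u₀ x‖} := by
    rw [← measure_iUnion hBdisj (fun k => (measS hu 1).inter (hBmeas k))]
    exact measure_mono (Set.iUnion_subset fun k => Set.inter_subset_left)
  have hscale : ∀ k : ℕ, volume ({x : E3 | (1:ℝ) < ‖u₀ x‖} ∩ B k)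
      = ENNReal.ofReal ((lam ^ (k:ℤ)) ^ 3) *
          volume ({x : E3 | 1 * lam ^ (k:ℤ) < ‖u₀ x‖} ∩ Ann lam) := fun k =>
    vol_scale hlam hiter (k:ℤ) 1 (Ann lam)
  -- pointwise bound
  have hpt : ∀ x : E3, ENNReal.ofReal ‖u₀ x‖ ^ 3
      ≤ 1 + ∑' k : ℕ, Set.indicator {x : E3 | 1 * lam ^ (k:ℤ) < ‖u₀ x‖}
          (fun _ => ENNReal.ofReal ((lam ^ (k:ℤ)) ^ 3 * lam ^ 3)) x := by
    intro x
    set v := ‖u₀ x‖ with hv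
    by_cases hv1 : v ≤ 1
    · calc ENNReal.ofReal v ^ 3 ≤ 1 ^ 3 :=
            pow_le_pow_left' (ENNReal.ofReal_le_one.2 hv1) 3
        _ = 1 := one_pow 3
        _ ≤ _ := le_self_add
    · push_neg at hv1
      obtain ⟨n, hn⟩ := pow_unbounded_of_one_lt v hlam
      have hex : ∃ m : ℕ, v ≤ lam ^ m := ⟨n, le_of_lt hn⟩
      set n₀ := Nat.find hex with hn₀def
      have hn₀ : v ≤ lam ^ n₀ := Nat.find_spec hex
      have hn₀ne : n₀ ≠ 0 := by
        intro h
        rw [h, pow_zero] at hn₀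
        linarith
      set k := n₀ - 1 with hkdef
      have hklt : ¬ (v ≤ lam ^ k) := Nat.find_min hex (by omega)
      push_neg at hklt
      have hcond : 1 * lam ^ (k:ℤ) < v := by
        rw [one_mul, zpow_natCast]; exact hklt
      have hterm : Set.indicator {x : E3 | 1 * lam ^ (k:ℤ) < ‖u₀ x‖}
          (fun _ => ENNReal.ofReal ((lam ^ (k:ℤ)) ^ 3 * lam ^ 3)) x
          = ENNReal.ofReal ((lam ^ (k:ℤ)) ^ 3 * lam ^ 3) := by
        rw [Set.indicator_apply, if_pos]
        exact hcond
      have hbound : ENNReal.ofReal v ^ 3 ≤ ENNReal.ofReal ((lam ^ (k:ℤ)) ^ 3 * lam ^ 3) := by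
        rw [← ENNReal.ofReal_pow (by positivity)]
        apply ENNReal.ofReal_le_ofReal
        have h1 : (lam ^ (k:ℤ)) ^ 3 * lam ^ 3 = (lam ^ (k+1) : ℝ) ^ 3 := by
          rw [zpow_natCast]; ring
        rw [h1]
        have h2 : v ≤ lam ^ (k+1) := by
          have : k + 1 = n₀ := by omega
          rw [this]; exact hn₀
        exact pow_le_pow_left₀ (by positivity) h2 3
      calc ENNReal.ofReal v ^ 3
          ≤ ∑' m : ℕ, Set.indicator {x : E3 | 1 * lam ^ (m:ℤ) < ‖u₀ x‖}
              (fun _ => ENNReal.ofReal ((lam ^ (m:ℤ)) ^ 3 * lam ^ 3)) x := by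
            refine le_trans ?_ (ENNReal.le_tsum k)
            rw [hterm]; exact hbound
        _ ≤ _ := le_add_self
  -- integrate
  have hInt : (∫⁻ x in Ann lam, ENNReal.ofReal ‖u₀ x‖ ^ 3)
      ≤ volume (Ann lam) + ENNReal.ofReal (lam ^ 3) * M ^ (3:ℕ) := by
    calc (∫⁻ x in Ann lam, ENNReal.ofReal ‖u₀ x‖ ^ 3)
        ≤ ∫⁻ x in Ann lam, (1 + ∑' k : ℕ, Set.indicator {x : E3 | 1 * lam ^ (k:ℤ) < ‖u₀ x‖}
            (fun _ => ENNReal.ofReal ((lam ^ (k:ℤ)) ^ 3 * lam ^ 3)) x) :=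
          lintegral_mono hpt
      _ = volume (Ann lam) + ∑' k : ℕ, ENNReal.ofReal ((lam ^ (k:ℤ)) ^ 3 * lam ^ 3) *
            volume ({x : E3 | 1 * lam ^ (k:ℤ) < ‖u₀ x‖} ∩ Ann lam) := by
          rw [lintegral_add_left measurable_const, lintegral_const,
            Measure.restrict_apply_univ, one_mul]
          congr 1
          rw [lintegral_tsum (fun k => (measurable_const.indicator (measS hu _)).aemeasurable)]
          apply tsum_congr
          intro k
          rw [lintegral_indicator_const (measS hu _), Measure.restrict_apply (measS hu _)]
      _ ≤ volume (Ann lam) + ENNReal.ofReal (lam ^ 3) * M ^ (3:ℕ) := by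
          refine add_le_add le_rfl ?_
          have hre : ∀ k : ℕ, ENNReal.ofReal ((lam ^ (k:ℤ)) ^ 3 * lam ^ 3) *
              volume ({x : E3 | 1 * lam ^ (k:ℤ) < ‖u₀ x‖} ∩ Ann lam)
              = ENNReal.ofReal (lam ^ 3) *
                  volume ({x : E3 | (1:ℝ) < ‖u₀ x‖} ∩ B k) := by
            intro k
            rw [hscale k, ENNReal.ofReal_mul (by positivity)]
            ring
          rw [tsum_congr hre, ENNReal.tsum_mul_left]
          exact mul_le_mul_right (le_trans hsum hν1) _
  apply lt_of_le_of_lt hInt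
  apply ENNReal.add_lt_top.2
  constructor
  · apply lt_of_le_of_lt (measure_mono (fun x hx => ?_)) (measure_closedBall_lt_top (x := (0:E3)) (r := lam))
    rw [Metric.mem_closedBall, dist_zero_right]
    exact le_of_lt hx.2
  · exact ENNReal.mul_lt_top ENNReal.ofReal_lt_top (ENNReal.pow_lt_top hM)

lemma cbrt_of_cube (a : ℝ≥0∞) : (a ^ (3:ℕ)) ^ ((1:ℝ)/3) = a := by
  rw [← ENNReal.rpow_natCast a 3, ← ENNReal.rpow_mul]
  norm_num

end Main
end DSSAux

/-- **Weak-`L³` control of a discretely self-similar field by its `L³` norm on a fundamental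
annulus.** If `λ > 1` and `u₀ : ℝ³ → ℝ³` is λ-DSS, i.e. `u₀(x) = λ u₀(λ x)` a.e., then
`‖u₀‖³_{L^{3,∞}} ≤ (λ³/(3(λ-1))) ∫_{1 ≤ |x| ≤ λ} |u₀|³ dx`. In particular, a λ-DSS field
is in `L^{3,∞}(ℝ³)` if and only if it is in `L³` of the annulus `{1 ≤ |x| ≤ λ}`. -/
theorem dss_weakL3_le_annulus_L3
    (lam : ℝ) (hlam : 1 < lam)
    (u₀ : EuclideanSpace ℝ (Fin 3) → EuclideanSpace ℝ (Fin 3)) (hu : Measurable u₀)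
    (hdss : ∀ᵐ x : EuclideanSpace ℝ (Fin 3), u₀ x = lam • u₀ (lam • x)) :
    (weakL3Norm u₀ ^ 3 ≤
      ENNReal.ofReal (lam ^ 3 / (3 * (lam - 1))) *
        ∫⁻ x in {x : EuclideanSpace ℝ (Fin 3) | 1 ≤ ‖x‖ ∧ ‖x‖ ≤ lam},
          ENNReal.ofReal ‖u₀ x‖ ^ 3) ∧
    (weakL3Norm u₀ < ∞ ↔
      (∫⁻ x in {x : EuclideanSpace ℝ (Fin 3) | 1 ≤ ‖x‖ ∧ ‖x‖ ≤ lam},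
          ENNReal.ofReal ‖u₀ x‖ ^ 3) < ∞) := by
  have hiter := ae_iter hlam hdss
  have hcongr : (∫⁻ x in {x : EuclideanSpace ℝ (Fin 3) | 1 ≤ ‖x‖ ∧ ‖x‖ ≤ lam},
      ENNReal.ofReal ‖u₀ x‖ ^ 3) = ∫⁻ x in Ann lam, ENNReal.ofReal ‖u₀ x‖ ^ 3 :=
    setLIntegral_congr (ann_ae hlam)
  set C : ℝ≥0∞ := ENNReal.ofReal (lam ^ 3 / (3 * (lam - 1))) *
      ∫⁻ x in {x : EuclideanSpace ℝ (Fin 3) | 1 ≤ ‖x‖ ∧ ‖x‖ ≤ lam},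
        ENNReal.ofReal ‖u₀ x‖ ^ 3 with hCdef
  have hC : ∀ α : ℝ, 0 < α →
      ENNReal.ofReal α ^ (3:ℕ) * volume {x | α < ‖u₀ x‖} ≤ C := by
    intro α hα
    rw [hCdef, hcongr]
    exact main_bound hlam hu hiter hα
  have hweak : weakL3Norm u₀ ≤ C ^ ((1:ℝ)/3) := by
    rw [weakL3Norm]
    apply iSup₂_le
    intro α hα
    have h3 : (ENNReal.ofReal α * volume {x | α < ‖u₀ x‖} ^ ((1:ℝ)/3)) ^ (3:ℕ)
        = ENNReal.ofReal α ^ (3:ℕ) * volume {x | α < ‖u₀ x‖} := by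
      rw [mul_pow, cube_of_cbrt]
    calc ENNReal.ofReal α * volume {x | α < ‖u₀ x‖} ^ ((1:ℝ)/3)
        = ((ENNReal.ofReal α * volume {x | α < ‖u₀ x‖} ^ ((1:ℝ)/3)) ^ (3:ℕ)) ^ ((1:ℝ)/3) :=
          (cbrt_of_cube _).symm
      _ ≤ C ^ ((1:ℝ)/3) := by
          apply ENNReal.rpow_le_rpow _ (by norm_num)
          rw [h3]
          exact hC α hα
  refine ⟨?_, ?_, ?_⟩
  · calc weakL3Norm u₀ ^ 3 ≤ (C ^ ((1:ℝ)/3)) ^ (3:ℕ) := pow_le_pow_left' hweak 3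
      _ = C := cube_of_cbrt C
  · intro hfin
    rw [hcongr]
    exact part2_forward hlam hu hiter hfin
  · intro hfin
    have hCfin : C < ∞ := ENNReal.mul_lt_top ENNReal.ofReal_lt_top hfin
    exact lt_of_le_of_lt hweak (ENNReal.rpow_lt_top_of_nonneg (by norm_num) hCfin.ne)
end
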